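/- Let G = (A, Ω) be a Müller game. If there is no nonempty X ⊆ V such that A(X) is a subarena that is a 1-trap in A and Player 0 fully wins G(X), then Win_0(G) = ∅ and Win_1(G) = V. -/

import Mathlib

open Set

/-- An arena: a finite directed bipartite graph where every vertex has an
outgoing edge.  The vertex set is `V0 ∪ V1` inside the finite type `α`. -/
structure Arena (α : Type) [Fintype α] where
  V0 : Set α
  V1 : Set α
  E : Set (α × α)
  disj : Disjoint V0 V1
  bipartite : E ⊆ (V0 ×ˢ V1) ∪ (V1 ×ˢ V0)
  succ : ∀ v ∈ V0 ∪ V1, ∃ u, (v, u) ∈ E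

variable {α : Type} [Fintype α]

/-- The set of positions of the arena. -/
def Arena.V (A : Arena α) : Set α := A.V0 ∪ A.V1

/-- The positions of Player σ (σ ∈ {0,1}). -/
def Arena.P (A : Arena α) (σ : Fin 2) : Set α := if σ = 0 then A.V0 else A.V1

/-- `A(X)` is a subarena: `X ⊆ V` and every vertex of `X` has an
outgoing edge inside `X`. -/
def Subarena (A : Arena α) (X : Set α) : Prop :=
  X ⊆ A.V ∧ ∀ v ∈ X, ∃ u ∈ X, (v, u) ∈ A.E

/-- `A(Y)` is a σ-trap of the pseudo-arena `A(X)`: every vertex of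
`Y ∩ V_{1-σ}` has an `E`-successor in `Y`, and every vertex of `Y ∩ V_σ`
has all of its `E`-successors inside `X` lying in `Y`.
A σ-trap of `A` itself is `TrapIn A A.V σ Y`. -/
def TrapIn (A : Arena α) (X : Set α) (σ : Fin 2) (Y : Set α) : Prop :=
  Y ⊆ X ∧
  (∀ v ∈ Y ∩ A.P (1 - σ), ∃ u ∈ Y, (v, u) ∈ A.E) ∧
  (∀ v ∈ Y ∩ A.P σ, ∀ u, (v, u) ∈ A.E → u ∈ X → u ∈ Y)

/-- A play of the (pseudo-)arena `A(X)`: an infinite `E`-path staying in `X`. -/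
def IsPlayIn (A : Arena α) (X : Set α) (ρ : ℕ → α) : Prop :=
  ∀ i, ρ i ∈ X ∧ (ρ i, ρ (i + 1)) ∈ A.E

/-- The set of vertices occurring infinitely often in the play `ρ`. -/
def InfOcc (ρ : ℕ → α) : Set α := {v | {i | ρ i = v}.Infinite}

/-- A strategy for Player σ in the game played on the pseudo-arena `A(X)`:
it maps a history (the finite prefix before the current vertex) and the
current vertex of `V_σ ∩ X` to an `E`-successor inside `X`. -/
structure StrategyIn (A : Arena α) (X : Set α) (σ : Fin 2) where
  move : List α → α → α
  legal : ∀ h v, v ∈ X ∩ A.P σ → (v, move h v) ∈ A.E ∧ move h v ∈ X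

/-- A play is consistent with a strategy for Player σ if every move from a
vertex of `V_σ` follows the strategy. -/
def ConsistentIn {A : Arena α} {X : Set α} {σ : Fin 2} (s : StrategyIn A X σ)
    (ρ : ℕ → α) : Prop :=
  ∀ i, ρ i ∈ A.P σ → ρ (i + 1) = s.move (List.ofFn fun j : Fin i => ρ j) (ρ i)

/-- Player σ wins the game on `A(X)` (with payoff `payoff` describing the
plays won by Player 0) from position `v`. -/
def WinsFrom (A : Arena α) (X : Set α) (payoff : (ℕ → α) → Prop) (σ : Fin 2)
    (v : α) : Prop :=
  ∃ s : StrategyIn A X σ, ∀ ρ, IsPlayIn A X ρ → ρ 0 = v → ConsistentIn s ρ →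
    (if σ = 0 then payoff ρ else ¬ payoff ρ)

/-- `Win_σ` of the game on `A(X)`. -/
def WinSet (A : Arena α) (X : Set α) (payoff : (ℕ → α) → Prop) (σ : Fin 2) :
    Set α :=
  {v ∈ X | WinsFrom A X payoff σ v}

/-- Player σ fully wins the game on `A(X)`. -/
def FullyWins (A : Arena α) (X : Set α) (payoff : (ℕ → α) → Prop)
    (σ : Fin 2) : Prop :=
  ∀ v ∈ X, WinsFrom A X payoff σ v

/-- The attractor `Attr_σ(T, A(X))`: the least `W ⊇ T` containing every
`u ∈ X ∩ V_σ` with some `E`-successor in `W ∩ X` and every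
`u ∈ X ∩ V_{1-σ}` all of whose `E`-successors inside `X` lie in `W`. -/
def AttrIn (A : Arena α) (X : Set α) (σ : Fin 2) (T : Set α) : Set α :=
  ⋂₀ {W | T ⊆ W ∧
    (∀ u ∈ X ∩ A.P σ, (∃ w ∈ W ∩ X, (u, w) ∈ A.E) → u ∈ W) ∧
    (∀ u ∈ X ∩ A.P (1 - σ), (∀ w, (u, w) ∈ A.E → w ∈ X → w ∈ W) → u ∈ W)}

/-- The Müller winning condition: Player 0 wins the play `ρ` iff `Inf(ρ) ∈ Ω`. -/
def MullerPayoff (Ω : Set (Set α)) : (ℕ → α) → Prop := fun ρ => InfOcc ρ ∈ Ω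


/-! ### Auxiliary development: determinacy of Muller games -/

noncomputable section

namespace MullerAux

open Classical

set_option linter.unusedSectionVars false

variable {α : Type} [Fintype α]

/-- the class of a set of vertices: `Cls Ω σ S` means that if `Inf(ρ) = S`
then player `σ` wins the play. -/
def Cls (Ω : Set (Set α)) (σ : Fin 2) (S : Set α) : Prop :=
  if σ = 0 then S ∈ Ω else S ∉ Ω

lemma fin2_cases (σ : Fin 2) : σ = 0 ∨ σ = 1 := by omega

lemma fin2_sub_sub (σ : Fin 2) : 1 - (1 - σ) = σ := by omega

lemma fin2_one_sub_ne (σ : Fin 2) : 1 - σ ≠ σ := by omega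

lemma cls_dichot (Ω : Set (Set α)) (σ : Fin 2) (S : Set α) :
    Cls Ω σ S ∨ Cls Ω (1-σ) S := by
  rcases fin2_cases σ with h | h <;> subst h <;> by_cases hS : S ∈ Ω <;>
    simp [Cls, hS]

lemma cls_not_both {Ω : Set (Set α)} {σ : Fin 2} {S : Set α}
    (h1 : Cls Ω σ S) (h2 : Cls Ω (1-σ) S) : False := by
  rcases fin2_cases σ with h | h <;> subst h <;> simp [Cls] at h1 h2 <;> tauto

lemma cls_of_not_cls {Ω : Set (Set α)} {σ : Fin 2} {S : Set α}
    (h : ¬ Cls Ω (1-σ) S) : Cls Ω σ S :=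
  (cls_dichot Ω σ S).resolve_right h

/-- the payoff for player `σ` : `Phi Ω σ ρ` holds iff player `σ` wins the play `ρ`. -/
def Phi (Ω : Set (Set α)) (σ : Fin 2) (ρ : ℕ → α) : Prop :=
  if σ = 0 then MullerPayoff Ω ρ else ¬ MullerPayoff Ω ρ

lemma phi_iff_cls (Ω : Set (Set α)) (σ : Fin 2) (ρ : ℕ → α) :
    Phi Ω σ ρ ↔ Cls Ω σ (InfOcc ρ) := by
  rcases fin2_cases σ with h | h <;> subst h <;> simp [Phi, Cls, MullerPayoff]

lemma winsFrom_iff_phi {A : Arena α} {X : Set α} {Ω : Set (Set α)} {σ : Fin 2} {v : α} :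
    WinsFrom A X (MullerPayoff Ω) σ v ↔
      ∃ s : StrategyIn A X σ, ∀ ρ, IsPlayIn A X ρ → ρ 0 = v → ConsistentIn s ρ →
        Phi Ω σ ρ := Iff.rfl

variable {A : Arena α}

lemma P_cover {σ : Fin 2} {v : α} (hv : v ∈ A.V) : v ∈ A.P σ ∨ v ∈ A.P (1-σ) := by
  rcases fin2_cases σ with h | h <;> subst h <;>
    simpa [Arena.P, Arena.V, or_comm] using hv

lemma P_disjoint {σ : Fin 2} {v : α} (h1 : v ∈ A.P σ) (h2 : v ∈ A.P (1-σ)) : False := by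
  have := A.disj
  rcases fin2_cases σ with h | h <;> subst h <;>
    simp [Arena.P] at h1 h2 <;> exact this.le_bot ⟨‹_›, ‹_›⟩

lemma P_subset_V (σ : Fin 2) : A.P σ ⊆ A.V := by
  rcases fin2_cases σ with h | h <;> subst h <;> simp [Arena.P, Arena.V]

lemma edge_mem_V {u w : α} (h : (u, w) ∈ A.E) : u ∈ A.V ∧ w ∈ A.V := by
  rcases A.bipartite h with h' | h' <;>
    rcases h' with ⟨h1, h2⟩ <;>
    exact ⟨by simp [Arena.V]; tauto, by simp [Arena.V]; tauto⟩

lemma V_subarena : Subarena A A.V := by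
  refine ⟨subset_rfl, fun v hv => ?_⟩
  obtain ⟨u, hu⟩ := A.succ v hv
  exact ⟨u, (edge_mem_V hu).2, hu⟩

end MullerAux
end

namespace MullerAux
section Plays
variable {α : Type} [Fintype α]
set_option linter.unusedSectionVars false

/-- the prefix (history) of a play: positions `0 … n-1`. -/
def pref (ρ : ℕ → α) (n : ℕ) : List α := List.ofFn fun j : Fin n => ρ j

@[simp] lemma pref_zero (ρ : ℕ → α) : pref ρ 0 = [] := rfl

@[simp] lemma pref_length (ρ : ℕ → α) (n : ℕ) : (pref ρ n).length = n := by
  simp [pref]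

lemma pref_succ (ρ : ℕ → α) (n : ℕ) : pref ρ (n+1) = pref ρ n ++ [ρ n] := by
  rw [pref, List.ofFn_succ', List.concat_eq_append]
  simp [pref]

lemma pref_getD (ρ : ℕ → α) {j n : ℕ} (h : j < n) (d : α) :
    (pref ρ n).getD j d = ρ j := by
  rw [List.getD_eq_getElem _ _ (by simpa using h)]
  simp [pref]

lemma consistentIn_iff {A : Arena α} {X : Set α} {σ : Fin 2} (s : StrategyIn A X σ)
    (ρ : ℕ → α) : ConsistentIn s ρ ↔
      ∀ i, ρ i ∈ A.P σ → ρ (i + 1) = s.move (pref ρ i) (ρ i) := Iff.rfl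

lemma pref_congr {p p' : ℕ → α} {i : ℕ} (h : ∀ j, j < i → p j = p' j) :
    pref p i = pref p' i := by
  induction i with
  | zero => rfl
  | succ i ih =>
    rw [pref_succ, pref_succ, ih (fun j hj => h j (by omega)), h i (by omega)]

lemma pref_add (ρ : ℕ → α) (n i : ℕ) :
    pref ρ (n + i) = pref ρ n ++ pref (fun t => ρ (n + t)) i := by
  induction i with
  | zero => simp
  | succ i ih => rw [← Nat.add_assoc, pref_succ, ih, pref_succ, List.append_assoc]

lemma pref_drop (ρ : ℕ → α) (n i : ℕ) :
    (pref ρ (n + i)).drop n = pref (fun t => ρ (n + t)) i := by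
  rw [pref_add]
  simp [List.drop_append]

lemma pref_take (ρ : ℕ → α) {m n : ℕ} (h : m ≤ n) :
    (pref ρ n).take m = pref ρ m := by
  obtain ⟨i, rfl⟩ := Nat.exists_eq_add_of_le h
  rw [pref_add]
  simp

lemma infinite_nat_iff_unbdd {s : Set ℕ} :
    s.Infinite ↔ ∀ n, ∃ m, n ≤ m ∧ m ∈ s := by
  constructor
  · intro hs n
    by_contra hc
    push_neg at hc
    exact hs (Set.Finite.subset (Set.finite_lt_nat n) (fun m hm => by
      by_contra h'
      exact hc m (le_of_not_gt h') hm))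
  · intro h
    intro hfin
    obtain ⟨B, hB⟩ := hfin.bddAbove
    obtain ⟨m, hm1, hm2⟩ := h (B+1)
    exact absurd (hB hm2) (by omega)

lemma infOcc_mem_iff {ρ : ℕ → α} {v : α} :
    v ∈ InfOcc ρ ↔ ∀ n, ∃ m, n ≤ m ∧ ρ m = v := by
  rw [InfOcc, Set.mem_setOf_eq, infinite_nat_iff_unbdd]
  rfl

lemma infOcc_shift (ρ : ℕ → α) (n : ℕ) : InfOcc (fun t => ρ (t + n)) = InfOcc ρ := by
  ext v
  simp only [infOcc_mem_iff]
  constructor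
  · intro h N
    obtain ⟨m, hm1, hm2⟩ := h N
    exact ⟨m + n, by omega, hm2⟩
  · intro h N
    obtain ⟨m, hm1, hm2⟩ := h (N + n)
    exact ⟨m - n, by omega, by rw [Nat.sub_add_cancel (by omega)]; exact hm2⟩

lemma infOcc_subset_of_eventually {ρ : ℕ → α} {S : Set α} (n : ℕ)
    (h : ∀ i, n ≤ i → ρ i ∈ S) : InfOcc ρ ⊆ S := by
  intro v hv
  obtain ⟨m, hm1, hm2⟩ := infOcc_mem_iff.mp hv n
  exact hm2 ▸ h m hm1

lemma exists_infOcc_of_io {ρ : ℕ → α} {T : Set α} (h : {i | ρ i ∈ T}.Infinite) :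
    ∃ v ∈ T, v ∈ InfOcc ρ := by
  by_contra hc
  push_neg at hc
  have : {i | ρ i ∈ T} ⊆ ⋃ v ∈ T, {i | ρ i = v} := by
    intro i hi; exact Set.mem_biUnion hi rfl
  refine h (Set.Finite.subset (Set.Finite.biUnion (Set.toFinite T) ?_) this)
  intro v hv
  have := hc v hv
  rw [InfOcc, Set.mem_setOf_eq, Set.not_infinite] at this
  exact this

/-- the tail of a play is a play, and consistency bookkeeping is handled at
use sites. -/
lemma isPlayIn_shift {A : Arena α} {X : Set α} {ρ : ℕ → α} (h : IsPlayIn A X ρ)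
    (n : ℕ) : IsPlayIn A X (fun t => ρ (t + n)) := by
  intro i
  exact ⟨(h (i + n)).1, by have := (h (i + n)).2; simpa [Nat.add_right_comm] using this⟩

end Plays
end MullerAux

namespace MullerAux
section Patch
variable {α : Type} [Fintype α] {A : Arena α}
set_option linter.unusedSectionVars false
open Classical

/-- a default successor inside a subarena. -/
noncomputable def dfltSucc {X : Set α} (hX : Subarena A X) (v : α) : α :=
  if h : v ∈ X then (hX.2 v h).choose else v

lemma dfltSucc_spec {X : Set α} (hX : Subarena A X) {v : α} (hv : v ∈ X) :
    dfltSucc hX v ∈ X ∧ (v, dfltSucc hX v) ∈ A.E := by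
  rw [dfltSucc, dif_pos hv]
  exact ⟨(hX.2 v hv).choose_spec.1, (hX.2 v hv).choose_spec.2⟩

/-- turn an arbitrary move function into a legal strategy by patching the
illegal moves with a default successor. -/
noncomputable def patch (σ : Fin 2) {X : Set α} (hX : Subarena A X) (f : List α → α → α) :
    StrategyIn A X σ where
  move h v := if (v, f h v) ∈ A.E ∧ f h v ∈ X then f h v else dfltSucc hX v
  legal h v hv := by
    by_cases hc : (v, f h v) ∈ A.E ∧ f h v ∈ X
    · simpa [hc] using hc
    · have := dfltSucc_spec hX hv.1
      simp only [if_neg hc]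
      exact ⟨this.2, this.1⟩

lemma patch_move_eq (σ : Fin 2) {X : Set α} (hX : Subarena A X)
    (f : List α → α → α) {h : List α} {v : α}
    (hE : (v, f h v) ∈ A.E) (hX' : f h v ∈ X) :
    (patch σ hX f).move h v = f h v := by
  simp [patch, hE, hX']

end Patch

section Attractor
variable {α : Type} [Fintype α] (A : Arena α) (X : Set α) (σ : Fin 2) (T : Set α)
set_option linter.unusedSectionVars false
open Classical

/-- one step of attractor computation for player `σ` in `A(X)` with target `T`. -/
def attrStep (W : Set α) : Set α :=
  T ∪ {u | u ∈ X ∧ u ∈ A.P σ ∧ ∃ w, (u, w) ∈ A.E ∧ w ∈ X ∧ w ∈ W}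
    ∪ {u | u ∈ X ∧ u ∈ A.P (1 - σ) ∧ ∀ w, (u, w) ∈ A.E → w ∈ X → w ∈ W}

/-- iterated attractor. -/
def attrN : ℕ → Set α
  | 0 => T
  | n + 1 => attrStep A X σ T (attrN n)

/-- the attractor of `T` for player `σ` in `A(X)`. -/
def Attr : Set α := ⋃ n, attrN A X σ T n

variable {A X σ T}

lemma attrStep_mono {W W' : Set α} (h : W ⊆ W') :
    attrStep A X σ T W ⊆ attrStep A X σ T W' := by
  intro u hu
  rcases hu with (hu | hu) | hu
  · exact Or.inl (Or.inl hu)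
  · exact Or.inl (Or.inr ⟨hu.1, hu.2.1, hu.2.2.choose,
      hu.2.2.choose_spec.1, hu.2.2.choose_spec.2.1, h hu.2.2.choose_spec.2.2⟩)
  · exact Or.inr ⟨hu.1, hu.2.1, fun w hw hw' => h (hu.2.2 w hw hw')⟩

lemma subset_attrStep (W : Set α) : T ⊆ attrStep A X σ T W :=
  fun u hu => Or.inl (Or.inl hu)

lemma attrN_mono_succ (n : ℕ) : attrN A X σ T n ⊆ attrN A X σ T (n + 1) := by
  induction n with
  | zero => exact subset_attrStep _
  | succ n ih => exact attrStep_mono ih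

lemma attrN_mono {m n : ℕ} (h : m ≤ n) : attrN A X σ T m ⊆ attrN A X σ T n := by
  induction h with
  | refl => exact subset_rfl
  | step _ ih => exact ih.trans (attrN_mono_succ _)

lemma mem_attr_iff {u : α} : u ∈ Attr A X σ T ↔ ∃ n, u ∈ attrN A X σ T n :=
  Set.mem_iUnion

lemma subset_attr : T ⊆ Attr A X σ T :=
  fun u hu => mem_attr_iff.mpr ⟨0, hu⟩

lemma attrStep_mono_target {T T' W W' : Set α} (hT : T ⊆ T') (hW : W ⊆ W') :
    attrStep A X σ T W ⊆ attrStep A X σ T' W' := by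
  intro u hu
  rcases hu with (hu | hu) | hu
  · exact Or.inl (Or.inl (hT hu))
  · exact Or.inl (Or.inr ⟨hu.1, hu.2.1, hu.2.2.choose,
      hu.2.2.choose_spec.1, hu.2.2.choose_spec.2.1, hW hu.2.2.choose_spec.2.2⟩)
  · exact Or.inr ⟨hu.1, hu.2.1, fun w hw hw' => hW (hu.2.2 w hw hw')⟩

lemma attr_mono_target {T T' : Set α} (hT : T ⊆ T') :
    Attr A X σ T ⊆ Attr A X σ T' := by
  intro u hu
  obtain ⟨n, hn⟩ := mem_attr_iff.mp hu
  refine mem_attr_iff.mpr ⟨n, ?_⟩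
  clear hu
  induction n generalizing u with
  | zero => exact hT hn
  | succ n ih =>
    refine attrStep_mono_target hT (fun w hw => ?_) hn
    exact ih hw


lemma attr_subset (hT : T ⊆ X) : Attr A X σ T ⊆ X := by
  intro u hu
  obtain ⟨n, hn⟩ := mem_attr_iff.mp hu
  induction n with
  | zero => exact hT hn
  | succ n ih =>
    rcases hn with (h | h) | h
    · exact hT h
    · exact h.1
    · exact h.1

lemma attr_closed_ctrl {u w : α} (hu : u ∈ X) (huP : u ∈ A.P σ)
    (hE : (u, w) ∈ A.E) (hwX : w ∈ X) (hw : w ∈ Attr A X σ T) :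
    u ∈ Attr A X σ T := by
  obtain ⟨n, hn⟩ := mem_attr_iff.mp hw
  exact mem_attr_iff.mpr ⟨n + 1, Or.inl (Or.inr ⟨hu, huP, w, hE, hwX, hn⟩)⟩

/-- the rank of a vertex in the attractor. -/
noncomputable def attrRank (u : α) : ℕ :=
  if h : ∃ n, u ∈ attrN A X σ T n then Nat.find h else 0

lemma attrRank_spec {u : α} (hu : u ∈ Attr A X σ T) :
    u ∈ attrN A X σ T (attrRank (A := A) (X := X) (σ := σ) (T := T) u) := by
  rw [attrRank, dif_pos (mem_attr_iff.mp hu)]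
  exact Nat.find_spec (mem_attr_iff.mp hu)

lemma attrRank_le {u : α} {n : ℕ} (hn : u ∈ attrN A X σ T n) :
    attrRank (A := A) (X := X) (σ := σ) (T := T) u ≤ n := by
  rw [attrRank, dif_pos ⟨n, hn⟩]
  exact Nat.find_le hn

lemma attrRank_pos {u : α} (hu : u ∈ Attr A X σ T) (hT : u ∉ T) :
    u ∈ attrStep A X σ T (attrN A X σ T (attrRank (A := A) (X := X) (σ := σ) (T := T) u - 1)) := by
  have hsp := attrRank_spec hu
  cases hn : attrRank (A := A) (X := X) (σ := σ) (T := T) u with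
  | zero => rw [hn] at hsp; exact absurd hsp hT
  | succ n => rw [hn] at hsp; exact hsp

/-- from a controlled vertex in the attractor (not yet in the target) there is a
rank-decreasing move. -/
lemma attr_ctrl_move {u : α} (hu : u ∈ Attr A X σ T) (hT : u ∉ T) (hP : u ∈ A.P σ) :
    ∃ w, (u, w) ∈ A.E ∧ w ∈ X ∧ w ∈ Attr A X σ T ∧
      attrRank (A := A) (X := X) (σ := σ) (T := T) w <
        attrRank (A := A) (X := X) (σ := σ) (T := T) u := by
  have h := attrRank_pos hu hT
  set r := attrRank (A := A) (X := X) (σ := σ) (T := T) u with hr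
  have hrpos : 0 < r := by
    rcases Nat.eq_zero_or_pos r with h0 | h0
    · exfalso; have := attrRank_spec hu; rw [← hr, h0] at this; exact hT this
    · exact h0
  rcases h with (h | h) | h
  · exact absurd h hT
  · obtain ⟨_, _, w, hE, hwX, hw⟩ := h
    exact ⟨w, hE, hwX, mem_attr_iff.mpr ⟨_, hw⟩,
      lt_of_le_of_lt (attrRank_le hw) (by omega)⟩
  · exact absurd h.2.1 (fun hP' => P_disjoint hP hP')

/-- from an opponent vertex in the attractor (not in the target) every move
inside `X` decreases the rank. -/
lemma attr_opp_move {u w : α} (hu : u ∈ Attr A X σ T) (hT : u ∉ T)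
    (hP : u ∈ A.P (1 - σ)) (hE : (u, w) ∈ A.E) (hwX : w ∈ X) :
    w ∈ Attr A X σ T ∧
      attrRank (A := A) (X := X) (σ := σ) (T := T) w <
        attrRank (A := A) (X := X) (σ := σ) (T := T) u := by
  have h := attrRank_pos hu hT
  set r := attrRank (A := A) (X := X) (σ := σ) (T := T) u with hr
  have hrpos : 0 < r := by
    rcases Nat.eq_zero_or_pos r with h0 | h0
    · exfalso; have := attrRank_spec hu; rw [← hr, h0] at this; exact hT this
    · exact h0
  rcases h with (h | h) | h
  · exact absurd h hT
  · exact absurd h.2.1 (fun hP' => P_disjoint hP' hP)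
  · have := h.2.2 w hE hwX
    exact ⟨mem_attr_iff.mpr ⟨_, this⟩, lt_of_le_of_lt (attrRank_le this) (by omega)⟩

/-- an increasing chain of sets in a finite type, generated by iterating a step
function, stabilizes. -/
lemma chain_stabilize (g : ℕ → Set α) (hmono : ∀ n, g n ⊆ g (n+1))
    (hstep : ∀ n, g n = g (n+1) → g (n+1) = g (n+2)) :
    ∃ N, ∀ m, N ≤ m → g m = g N := by
  have hex : ∃ n, g n = g (n+1) := by
    by_contra hc
    push_neg at hc
    have hgrow : ∀ n, n ≤ (g n).ncard := by
      intro n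
      induction n with
      | zero => omega
      | succ n ih =>
        have hss : g n ⊂ g (n+1) := Set.ssubset_iff_subset_ne.mpr ⟨hmono n, hc n⟩
        have := Set.ncard_lt_ncard hss (Set.toFinite _)
        omega
    have h1 := hgrow (Fintype.card α + 1)
    have h2 : (g (Fintype.card α + 1)).ncard ≤ Fintype.card α := by
      have := Set.ncard_le_ncard (Set.subset_univ (g (Fintype.card α + 1)))
        (Set.toFinite _)
      rwa [Set.ncard_univ, Nat.card_eq_fintype_card] at this
    omega
  obtain ⟨N, hN⟩ := hex
  refine ⟨N, fun m hm => ?_⟩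
  obtain ⟨k, rfl⟩ := Nat.exists_eq_add_of_le hm
  induction k with
  | zero => rfl
  | succ k ih =>
    have step : ∀ j, g (N + j) = g (N + j + 1) := by
      intro j
      induction j with
      | zero => exact hN
      | succ j ih' => exact hstep _ ih'
    rw [show N + (k+1) = (N + k) + 1 by omega, ← step k, ih (by omega)]

lemma attr_eq_attrN : ∃ N, Attr A X σ T = attrN A X σ T N := by
  obtain ⟨N, hN⟩ := chain_stabilize (attrN A X σ T) attrN_mono_succ
    (fun n h => by
      show attrStep A X σ T (attrN A X σ T n) = attrStep A X σ T (attrN A X σ T (n+1))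
      rw [← h])
  refine ⟨N, Set.Subset.antisymm ?_ (fun u hu => mem_attr_iff.mpr ⟨N, hu⟩)⟩
  intro u hu
  obtain ⟨m, hm⟩ := mem_attr_iff.mp hu
  rcases le_or_gt m N with h | h
  · exact attrN_mono h hm
  · rw [← hN m (le_of_lt h)]; exact hm

/-- forced closure: an opponent vertex all of whose successors inside `X` lie
in the attractor belongs to the attractor. -/
lemma attr_forced {v : α} (hv : v ∈ X) (hP : v ∈ A.P (1 - σ))
    (h : ∀ w, (v, w) ∈ A.E → w ∈ X → w ∈ Attr A X σ T) : v ∈ Attr A X σ T := by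
  obtain ⟨N, hN⟩ := attr_eq_attrN (A := A) (X := X) (σ := σ) (T := T)
  refine mem_attr_iff.mpr ⟨N + 1, Or.inr ⟨hv, hP, fun w hw hwX => ?_⟩⟩
  rw [← hN]
  exact h w hw hwX

/-- the complement of the attractor is a trap for player `σ` in `X`. -/
lemma attr_compl_trap {v u : α} (hv : v ∈ X \ Attr A X σ T) (hP : v ∈ A.P σ)
    (hE : (v, u) ∈ A.E) (hu : u ∈ X) : u ∈ X \ Attr A X σ T := by
  refine ⟨hu, fun hc => hv.2 ?_⟩
  exact attr_closed_ctrl hv.1 hP hE hu hc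

/-- the complement of the attractor (inside a subarena) is a subarena. -/
lemma attr_compl_subarena (hX : Subarena A X) :
    Subarena A (X \ Attr A X σ T) := by
  refine ⟨(Set.diff_subset).trans hX.1, fun v hv => ?_⟩
  rcases P_cover (σ := σ) (hX.1 hv.1) with hP | hP
  · obtain ⟨u, huX, huE⟩ := hX.2 v hv.1
    exact ⟨u, attr_compl_trap hv hP huE huX, huE⟩
  · by_contra hcon
    push_neg at hcon
    refine hv.2 (attr_forced hv.1 hP fun w hw hwX => ?_)
    by_contra hwA
    exact (hcon w ⟨hwX, hwA⟩) hw

/-- the default attractor move for the controlling player. -/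
noncomputable def attrMove (A : Arena α) (X : Set α) (σ : Fin 2) (T : Set α) (u : α) : α :=
  if h : u ∈ Attr A X σ T ∧ u ∉ T ∧ u ∈ A.P σ then
    (attr_ctrl_move h.1 h.2.1 h.2.2).choose
  else u

lemma attrMove_spec {u : α} (hu : u ∈ Attr A X σ T) (hT : u ∉ T) (hP : u ∈ A.P σ) :
    (u, attrMove A X σ T u) ∈ A.E ∧ attrMove A X σ T u ∈ X ∧
      attrMove A X σ T u ∈ Attr A X σ T ∧
      attrRank (A := A) (X := X) (σ := σ) (T := T) (attrMove A X σ T u) <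
        attrRank (A := A) (X := X) (σ := σ) (T := T) u := by
  rw [attrMove, dif_pos ⟨hu, hT, hP⟩]
  exact (attr_ctrl_move hu hT hP).choose_spec

/-- if the controlling player plays attractor moves from some time on, the play
reaches the target. -/
lemma attr_reach (hT : T ⊆ X) (hXV : X ⊆ A.V) {ρ : ℕ → α} (hplay : IsPlayIn A X ρ)
    (t0 : ℕ) (h0 : ρ t0 ∈ Attr A X σ T)
    (hmoves : ∀ t, t0 ≤ t → ρ t ∈ Attr A X σ T → ρ t ∉ T → ρ t ∈ A.P σ →
      ρ (t + 1) = attrMove A X σ T (ρ t)) :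
    ∃ t1, t0 ≤ t1 ∧ ρ t1 ∈ T := by
  by_contra hc
  push_neg at hc
  have key : ∀ t, t0 ≤ t → ρ t ∈ Attr A X σ T →
      ρ (t+1) ∈ Attr A X σ T ∧
        attrRank (A := A) (X := X) (σ := σ) (T := T) (ρ (t+1)) <
          attrRank (A := A) (X := X) (σ := σ) (T := T) (ρ t) := by
    intro t ht hA
    have hnT : ρ t ∉ T := hc t ht
    rcases P_cover (σ := σ) (hXV ((hplay t).1)) with hP | hP
    · have := hmoves t ht hA hnT hP
      have hspec := attrMove_spec hA hnT hP
      rw [this]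
      exact ⟨hspec.2.2.1, hspec.2.2.2⟩
    · exact attr_opp_move hA hnT hP (hplay t).2 (hplay (t+1)).1
  have desc : ∀ k, attrRank (A := A) (X := X) (σ := σ) (T := T) (ρ (t0 + k)) + k ≤
      attrRank (A := A) (X := X) (σ := σ) (T := T) (ρ t0) := by
    have mem : ∀ k, ρ (t0 + k) ∈ Attr A X σ T := by
      intro k
      induction k with
      | zero => exact h0
      | succ k ih => exact (key (t0 + k) (by omega) ih).1
    intro k
    induction k with
    | zero => simp
    | succ k ih =>
      have := (key (t0 + k) (by omega) (mem k)).2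
      have h' : t0 + (k + 1) = (t0 + k) + 1 := by omega
      rw [h']
      omega
  have := desc (attrRank (A := A) (X := X) (σ := σ) (T := T) (ρ t0) + 1)
  omega

end Attractor
end MullerAux

namespace MullerAux
section Switch
variable {α : Type} [Fintype α] {A : Arena α} {Ω : Set (Set α)}
set_option linter.unusedSectionVars false
open Classical

lemma phi_congr {π : Fin 2} {ρ ρ' : ℕ → α} (h : InfOcc ρ' = InfOcc ρ) :
    Phi Ω π ρ' → Phi Ω π ρ := by
  rcases fin2_cases π with hp | hp <;> subst hp <;> simp [Phi, MullerPayoff, h] <;> tauto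

lemma ofFn_eq_pref (ρ : ℕ → α) (i : ℕ) :
    (List.ofFn fun j : Fin i => ρ j) = pref ρ i := rfl

lemma infOcc_tail_eq (ρ : ℕ → α) (n : ℕ) :
    InfOcc (fun t => ρ (n + t)) = InfOcc ρ := by
  have : (fun t => ρ (n + t)) = fun t => ρ (t + n) :=
    funext fun t => by rw [Nat.add_comm]
  rw [this, infOcc_shift]

lemma isPlayIn_tail {X : Set α} {ρ : ℕ → α} (h : IsPlayIn A X ρ) (n : ℕ) :
    IsPlayIn A X (fun t => ρ (n + t)) := by
  intro i
  constructor
  · exact (h (n+i)).1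
  · show (ρ (n+i), ρ (n+(i+1))) ∈ A.E
    rw [show n + (i+1) = (n+i)+1 by omega]
    exact (h (n+i)).2

/-- a strategy combinator: play `g` until the play has visited `D`; from the
first visit to some `u ∈ D`, play the strategy `sD u` (with shifted history). -/
noncomputable def switchMove {X : Set α} {π : Fin 2} (D : Set α)
    (g : List α → α → α) (sD : α → StrategyIn A X π)
    (h : List α) (v' : α) : α :=
  if hex : ∃ j, j < (h ++ [v']).length ∧ (h ++ [v']).getD j v' ∈ D then
    (sD ((h ++ [v']).getD (Nat.find hex) v')).move (h.drop (Nat.find hex)) v'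
  else g h v'

lemma switchMove_eq_pre {X : Set α} {π : Fin 2} {D : Set α}
    {g : List α → α → α} {sD : α → StrategyIn A X π}
    {ρ : ℕ → α} {i : ℕ} (hno : ∀ j, j ≤ i → ρ j ∉ D) :
    switchMove D g sD (pref ρ i) (ρ i) = g (pref ρ i) (ρ i) := by
  rw [switchMove, dif_neg]
  rintro ⟨j, hj1, hj2⟩
  rw [← pref_succ, pref_length] at hj1
  rw [← pref_succ, pref_getD ρ hj1] at hj2
  exact hno j (by omega) hj2

lemma switchMove_eq_post {X : Set α} {π : Fin 2} {D : Set α}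
    {g : List α → α → α} {sD : α → StrategyIn A X π}
    {ρ : ℕ → α} {n i : ℕ} (hn : ρ n ∈ D) (hni : n ≤ i)
    (hfirst : ∀ j, j < n → ρ j ∉ D) :
    switchMove D g sD (pref ρ i) (ρ i) =
      (sD (ρ n)).move (pref (fun t => ρ (n + t)) (i - n)) (ρ i) := by
  have hex : ∃ j, j < ((pref ρ i) ++ [ρ i]).length ∧
      ((pref ρ i) ++ [ρ i]).getD j (ρ i) ∈ D := by
    refine ⟨n, ?_, ?_⟩
    · rw [← pref_succ, pref_length]; omega
    · rw [← pref_succ, pref_getD ρ (by omega)]; exact hn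
  rw [switchMove, dif_pos hex]
  have hfind : Nat.find hex = n := by
    rw [Nat.find_eq_iff]
    constructor
    · refine ⟨by rw [← pref_succ, pref_length]; omega, ?_⟩
      rw [← pref_succ, pref_getD ρ (by omega)]; exact hn
    · rintro m hm ⟨hm1, hm2⟩
      rw [← pref_succ, pref_length] at hm1
      rw [← pref_succ, pref_getD ρ hm1] at hm2
      exact hfirst m hm hm2
  rw [hfind, ← pref_succ, pref_getD ρ (by omega)]
  congr 1
  have h1 : pref ρ i = pref ρ (n + (i - n)) := by congr 1; omega
  rw [h1, pref_drop]

/-- transfer of a winning strategy from a trap to the ambient (sub)arena. -/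
lemma trapTransfer {X Z : Set α} {π : Fin 2} (hXsub : Subarena A X)
    (hZX : Z ⊆ X)
    (htrap : ∀ w ∈ Z, w ∈ A.P (1-π) → ∀ u, (w, u) ∈ A.E → u ∈ X → u ∈ Z)
    {v : α} (hv : v ∈ Z) (hw : WinsFrom A Z (MullerPayoff Ω) π v) :
    WinsFrom A X (MullerPayoff Ω) π v := by
  obtain ⟨s, hs⟩ := hw
  refine ⟨patch π hXsub s.move, fun ρ hplay h0 hcons => ?_⟩
  have hZ : ∀ t, ρ t ∈ Z := by
    intro t
    induction t with
    | zero => exact h0 ▸ hv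
    | succ t ih =>
      rcases P_cover (σ := π) (hXsub.1 (hplay t).1) with hP | hP
      · have hleg := s.legal (pref ρ t) (ρ t) ⟨ih, hP⟩
        have hc := hcons t hP
        rw [ofFn_eq_pref, patch_move_eq π hXsub s.move hleg.1 (hZX hleg.2)] at hc
        rw [hc]; exact hleg.2
      · exact htrap _ ih hP _ (hplay t).2 (hplay (t+1)).1
  have hplayZ : IsPlayIn A Z ρ := fun t => ⟨hZ t, (hplay t).2⟩
  have hconsZ : ConsistentIn s ρ := by
    intro t hP
    have hleg := s.legal (pref ρ t) (ρ t) ⟨hZ t, hP⟩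
    have hc := hcons t hP
    rw [ofFn_eq_pref, patch_move_eq π hXsub s.move hleg.1 (hZX hleg.2)] at hc
    rw [ofFn_eq_pref]
    exact hc
  exact hs ρ hplayZ h0 hconsZ

/-- winning via the attractor. -/
lemma attrWin {X T : Set α} (π : Fin 2) (hXsub : Subarena A X) (hT : T ⊆ X)
    (sT : ∀ u ∈ T, WinsFrom A X (MullerPayoff Ω) π u) :
    ∀ v ∈ Attr A X π T, WinsFrom A X (MullerPayoff Ω) π v := by
  intro v hv
  choose sW hsW using sT
  set sD : α → StrategyIn A X π := fun u =>
    if h : u ∈ T then sW u h else patch π hXsub (fun _ x => x) with hsDdef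
  set F := switchMove (X := X) (π := π) T (fun _ v' => attrMove A X π T v') sD with hF
  refine ⟨patch π hXsub F, fun ρ hplay h0 hcons => ?_⟩
  by_cases hhit : ∃ t, ρ t ∈ T
  · set n := Nat.find hhit with hn
    have hnT : ρ n ∈ T := Nat.find_spec hhit
    have hfirst : ∀ j, j < n → ρ j ∉ T := fun j hj => Nat.find_min hhit hj
    set ρ' : ℕ → α := fun t => ρ (n + t) with hρ'
    have hFeq : ∀ t, F (pref ρ (n+t)) (ρ (n+t)) =
        (sW (ρ n) hnT).move (pref ρ' t) (ρ (n+t)) := by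
      intro t
      rw [hF, switchMove_eq_post hnT (by omega) hfirst, ← hρ',
        Nat.add_sub_cancel_left, hsDdef]
      simp only [dif_pos hnT]
    have hcons' : ConsistentIn (sW (ρ n) hnT) ρ' := by
      intro t hP
      have hleg := (sW (ρ n) hnT).legal (pref ρ' t) (ρ (n+t)) ⟨(hplay (n+t)).1, hP⟩
      have hc := hcons (n + t) hP
      rw [ofFn_eq_pref] at hc
      rw [patch_move_eq π hXsub F (by rw [hFeq]; exact hleg.1)
        (by rw [hFeq]; exact hleg.2), hFeq] at hc
      rw [ofFn_eq_pref]
      show ρ (n + (t+1)) = _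
      rw [show n + (t+1) = (n+t)+1 by omega]
      exact hc
    have hwin := hsW (ρ n) hnT ρ' (isPlayIn_tail hplay n) rfl hcons'
    exact phi_congr (infOcc_tail_eq ρ n) hwin
  · exfalso
    push_neg at hhit
    have hmoves : ∀ t, 0 ≤ t → ρ t ∈ Attr A X π T → ρ t ∉ T → ρ t ∈ A.P π →
        ρ (t+1) = attrMove A X π T (ρ t) := by
      intro t _ hA hnT hP
      have hc := hcons t hP
      rw [ofFn_eq_pref] at hc
      have hFeq : F (pref ρ t) (ρ t) = attrMove A X π T (ρ t) := by
        rw [hF, switchMove_eq_pre (fun j _ => hhit j)]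
      have hspec := attrMove_spec hA hnT hP
      rw [patch_move_eq π hXsub F (by rw [hFeq]; exact hspec.1)
        (by rw [hFeq]; exact hspec.2.1), hFeq] at hc
      exact hc
    obtain ⟨t1, _, ht1⟩ := attr_reach hT hXsub.1 hplay 0 (by rw [h0]; exact hv) hmoves
    exact hhit t1 ht1

/-- concatenation: play a winning strategy of the subgame on `Y`; if the
opponent ever exits `Y` (necessarily into `D`), switch to a winning strategy
there. -/
lemma trapConcat {X Y D : Set α} (π : Fin 2) (hXsub : Subarena A X) (hYX : Y ⊆ X)
    (hexit : ∀ w ∈ Y, w ∈ A.P (1-π) → ∀ u, (w, u) ∈ A.E → u ∈ X → u ∈ Y ∪ D)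
    (hD : ∀ u ∈ D, WinsFrom A X (MullerPayoff Ω) π u)
    {v : α} (hvY : v ∈ Y) (hv : WinsFrom A Y (MullerPayoff Ω) π v) :
    WinsFrom A X (MullerPayoff Ω) π v := by
  obtain ⟨sY, hsY⟩ := hv
  choose sW hsW using hD
  set sD : α → StrategyIn A X π := fun u =>
    if h : u ∈ D then sW u h else patch π hXsub (fun _ x => x) with hsDdef
  set F := switchMove (X := X) (π := π) Yᶜ sY.move sD with hF
  refine ⟨patch π hXsub F, fun ρ hplay h0 hcons => ?_⟩
  by_cases hhit : ∃ t, ρ t ∈ (Yᶜ : Set α)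
  · set n := Nat.find hhit with hn
    have hnY : ρ n ∉ Y := Nat.find_spec hhit
    have hfirstc : ∀ j, j < n → ρ j ∉ (Yᶜ : Set α) := fun j hj => Nat.find_min hhit hj
    have hfirst : ∀ j, j < n → ρ j ∈ Y := fun j hj => not_not.mp (hfirstc j hj)
    have hnpos : 0 < n := by
      rcases Nat.eq_zero_or_pos n with hzn | h
      · exfalso; exact hnY (by rw [hzn, h0]; exact hvY)
      · exact h
    have hprevY : ρ (n-1) ∈ Y := hfirst _ (by omega)
    have hstep : (ρ (n-1), ρ n) ∈ A.E := by
      have := (hplay (n-1)).2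
      rwa [show n-1+1 = n by omega] at this
    have hpreeq : ∀ i, (∀ j, j ≤ i → ρ j ∈ Y) →
        F (pref ρ i) (ρ i) = sY.move (pref ρ i) (ρ i) := by
      intro i hall
      rw [hF, switchMove_eq_pre (fun j hj => not_not_intro (hall j hj))]
    have hnD : ρ n ∈ D := by
      rcases P_cover (σ := π) (hXsub.1 (hplay (n-1)).1) with hP | hP
      · exfalso
        have hc := hcons (n-1) hP
        rw [ofFn_eq_pref] at hc
        have hleg := sY.legal (pref ρ (n-1)) (ρ (n-1)) ⟨hprevY, hP⟩
        rw [patch_move_eq π hXsub F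
          (by rw [hpreeq (n-1) (fun j hj => hfirst j (by omega))]; exact hleg.1)
          (by rw [hpreeq (n-1) (fun j hj => hfirst j (by omega))]; exact hYX hleg.2),
          hpreeq (n-1) (fun j hj => hfirst j (by omega))] at hc
        rw [show n-1+1 = n by omega] at hc
        exact hnY (hc ▸ hleg.2)
      · rcases hexit _ hprevY hP _ hstep (hplay n).1 with h | h
        · exact absurd h hnY
        · exact h
    set ρ' : ℕ → α := fun t => ρ (n + t) with hρ'
    have hnYc : ρ n ∈ (Yᶜ : Set α) := hnY
    have hFeq : ∀ t, F (pref ρ (n+t)) (ρ (n+t)) =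
        (sW (ρ n) hnD).move (pref ρ' t) (ρ (n+t)) := by
      intro t
      rw [hF, switchMove_eq_post hnYc (by omega) hfirstc, ← hρ',
        Nat.add_sub_cancel_left, hsDdef]
      simp only [dif_pos hnD]
    have hcons' : ConsistentIn (sW (ρ n) hnD) ρ' := by
      intro t hP
      have hleg := (sW (ρ n) hnD).legal (pref ρ' t) (ρ (n+t)) ⟨(hplay (n+t)).1, hP⟩
      have hc := hcons (n + t) hP
      rw [ofFn_eq_pref] at hc
      rw [patch_move_eq π hXsub F (by rw [hFeq]; exact hleg.1)
        (by rw [hFeq]; exact hleg.2), hFeq] at hc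
      rw [ofFn_eq_pref]
      show ρ (n + (t+1)) = _
      rw [show n + (t+1) = (n+t)+1 by omega]
      exact hc
    have hwin := hsW (ρ n) hnD ρ' (isPlayIn_tail hplay n) rfl hcons'
    exact phi_congr (infOcc_tail_eq ρ n) hwin
  · push_neg at hhit
    have hY : ∀ t, ρ t ∈ Y := fun t => not_not.mp (hhit t)
    have hplayY : IsPlayIn A Y ρ := fun t => ⟨hY t, (hplay t).2⟩
    have hconsY : ConsistentIn sY ρ := by
      intro t hP
      have hc := hcons t hP
      rw [ofFn_eq_pref] at hc
      have hFeq : F (pref ρ t) (ρ t) = sY.move (pref ρ t) (ρ t) := by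
        rw [hF, switchMove_eq_pre (fun j _ => hhit j)]
      have hleg := sY.legal (pref ρ t) (ρ t) ⟨hY t, hP⟩
      rw [patch_move_eq π hXsub F (by rw [hFeq]; exact hleg.1)
        (by rw [hFeq]; exact hYX hleg.2), hFeq] at hc
      rw [ofFn_eq_pref]
      exact hc
    exact hsY ρ hplayY h0 hconsY

end Switch
end MullerAux

namespace MullerAux
section Cycling
variable {α : Type} [Fintype α] {A : Arena α} {Ω : Set (Set α)}
set_option linter.unusedSectionVars false
open Classical

/-- the `i`-th set in the cyclic enumeration `L`. -/
def Sx (L : List (Set α)) (i : ℕ) : Set α := L.getD (i % L.length) ∅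

/-- the target `Z \ S_i` of phase `i`. -/
def Tg (Z : Set α) (L : List (Set α)) (i : ℕ) : Set α := Z \ Sx L i

/-- the region of phase `i` where the opponent cannot force reaching the
target. -/
def Yy (A : Arena α) (Z : Set α) (σ : Fin 2) (L : List (Set α)) (i : ℕ) : Set α :=
  Z \ Attr A Z σ (Tg Z L i)

lemma Sx_mod (L : List (Set α)) (i : ℕ) : Sx L i = Sx L (i % L.length) := by
  rw [Sx, Sx, Nat.mod_mod_of_dvd _ dvd_rfl]

/-- the phase of a history. -/
noncomputable def phL (Z : Set α) (L : List (Set α)) : List α → ℕ := fun l =>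
  l.foldl (fun st x => if x ∈ Tg Z L st then st + 1 else st) 0

lemma phL_append (Z : Set α) (L : List (Set α)) (l : List α) (x : α) :
    phL Z L (l ++ [x]) =
      if x ∈ Tg Z L (phL Z L l) then phL Z L l + 1 else phL Z L l := by
  rw [phL, List.foldl_append]
  simp [phL]
  exact if_congr Iff.rfl rfl rfl

lemma phL_le_length (Z : Set α) (L : List (Set α)) (l : List α) :
    phL Z L l ≤ l.length := by
  suffices h : ∀ (l : List α) (st : ℕ),
      l.foldl (fun st x => if x ∈ Tg Z L st then st + 1 else st) st ≤ st + l.length by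
    simpa [phL] using h l 0
  intro l
  induction l with
  | nil => simp
  | cons x l ih =>
    intro st
    simp only [List.foldl_cons, List.length_cons]
    refine le_trans (ih _) ?_
    split <;> omega

/-- the phase of a play before time `t`. -/
noncomputable def phf (Z : Set α) (L : List (Set α)) (ρ : ℕ → α) (t : ℕ) : ℕ :=
  phL Z L (pref ρ t)

lemma phf_eq (Z : Set α) (L : List (Set α)) (ρ : ℕ → α) (t : ℕ) :
    phf Z L ρ t = phL Z L (pref ρ t) := rfl

lemma phf_zero (Z : Set α) (L : List (Set α)) (ρ : ℕ → α) : phf Z L ρ 0 = 0 := rfl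

lemma phf_succ (Z : Set α) (L : List (Set α)) (ρ : ℕ → α) (t : ℕ) :
    phf Z L ρ (t+1) =
      if ρ t ∈ Tg Z L (phf Z L ρ t) then phf Z L ρ t + 1 else phf Z L ρ t := by
  rw [phf, pref_succ, phL_append]
  rfl

lemma phf_mono (Z : Set α) (L : List (Set α)) (ρ : ℕ → α) : Monotone (phf Z L ρ) := by
  apply monotone_nat_of_le_succ
  intro t
  rw [phf_succ]
  split <;> omega

lemma phf_le (Z : Set α) (L : List (Set α)) (ρ : ℕ → α) (t : ℕ) : phf Z L ρ t ≤ t :=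
  le_trans (phL_le_length Z L _) (by simp)

/-- a good index: still in the current phase and inside the phase region. -/
def GoodP (A : Arena α) (Z : Set α) (σ : Fin 2) (L : List (Set α))
    (l : List α) (d : α) (j : ℕ) : Prop :=
  phL Z L (l.take (j+1)) = phL Z L l ∧ l.getD j d ∈ Yy A Z σ L (phL Z L l)

/-- the entry point of the current sojourn in the phase region. -/
noncomputable def entL (A : Arena α) (Z : Set α) (σ : Fin 2) (L : List (Set α))
    (l : List α) (d : α) : ℕ :=
  Nat.find (p := fun e => ∀ j, e ≤ j → j < l.length → GoodP A Z σ L l d j)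
    ⟨l.length, fun _ hj hj' => absurd hj' (Nat.not_lt.mpr hj)⟩

/-- THE CYCLING LEMMA.  If every set that the opponent `1-σ` of `σ` could
realize as infinity set of a play in `Z` appears in the list `L`, and `σ`
fully wins the subgame on each region `Yy i`, then `σ` fully wins `G(Z)`. -/
lemma cycling (Z : Set α) (σ : Fin 2) (L : List (Set α)) (hZ : Subarena A Z)
    (hmem : ∀ ρ : ℕ → α, IsPlayIn A Z ρ → Cls Ω (1-σ) (InfOcc ρ) → InfOcc ρ ∈ L)
    (hwin : ∀ (r : ℕ) (u : α), u ∈ Yy A Z σ L r →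
      WinsFrom A (Yy A Z σ L r) (MullerPayoff Ω) σ u) :
    ∀ v ∈ Z, WinsFrom A Z (MullerPayoff Ω) σ v := by
  intro v hvZ
  have hYsub : ∀ r, Subarena A (Yy A Z σ L r) := fun r => attr_compl_subarena hZ
  have hYZ : ∀ r, Yy A Z σ L r ⊆ Z := fun r => Set.diff_subset
  have hTgZ : ∀ i, Tg Z L i ⊆ Z := fun i => Set.diff_subset
  choose sY hsY using hwin
  set sY' : (r : ℕ) → α → StrategyIn A (Yy A Z σ L r) σ := fun r u =>
    if h : u ∈ Yy A Z σ L r then sY r u h else patch σ (hYsub r) (fun _ x => x)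
    with hsY'def
  set F : List α → α → α := fun h v' =>
    if v' ∈ Yy A Z σ L (phL Z L (h ++ [v'])) then
      (sY' (phL Z L (h ++ [v']))
        ((h ++ [v']).getD (entL A Z σ L (h ++ [v']) v') v')).move
        (h.drop (entL A Z σ L (h ++ [v']) v')) v'
    else if v' ∈ Attr A Z σ (Tg Z L (phL Z L (h ++ [v']))) \ Tg Z L (phL Z L (h ++ [v'])) then
      attrMove A Z σ (Tg Z L (phL Z L (h ++ [v']))) v'
    else dfltSucc hZ v'
    with hFdef
  refine ⟨patch σ hZ F, fun ρ hplay h0 hcons => ?_⟩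
  -- evaluation of the strategy on the play
  have hFY : ∀ t, ρ t ∈ Yy A Z σ L (phf Z L ρ (t+1)) →
      F (pref ρ t) (ρ t) =
        (sY' (phf Z L ρ (t+1))
          ((pref ρ (t+1)).getD (entL A Z σ L (pref ρ (t+1)) (ρ t)) (ρ t))).move
          ((pref ρ t).drop (entL A Z σ L (pref ρ (t+1)) (ρ t))) (ρ t) := by
    intro t hY
    rw [phf_eq] at hY
    simp only [hFdef]
    rw [← pref_succ, if_pos hY, ← phf_eq]
  have hFA : ∀ t, ρ t ∉ Yy A Z σ L (phf Z L ρ (t+1)) →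
      ρ t ∈ Attr A Z σ (Tg Z L (phf Z L ρ (t+1))) \ Tg Z L (phf Z L ρ (t+1)) →
      F (pref ρ t) (ρ t) = attrMove A Z σ (Tg Z L (phf Z L ρ (t+1))) (ρ t) := by
    intro t hY hA
    rw [phf_eq] at hY hA
    simp only [hFdef]
    rw [← pref_succ, if_neg hY, if_pos hA, ← phf_eq]
  by_cases hB : ∀ N, ∃ t, N ≤ phf Z L ρ t
  · -- Case I: infinitely many phase changes
    show Phi Ω σ ρ
    rw [phi_iff_cls]
    by_contra hnc
    have hcls : Cls Ω (1-σ) (InfOcc ρ) := cls_of_not_cls (by rwa [fin2_sub_sub])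
    have hInfL : InfOcc ρ ∈ L := hmem ρ hplay hcls
    obtain ⟨r, hr⟩ := List.mem_iff_get.mp hInfL
    have hrlen : (r : ℕ) < L.length := r.isLt
    have hSr : Sx L r = InfOcc ρ := by
      rw [Sx, Nat.mod_eq_of_lt hrlen, List.getD_eq_getElem _ _ hrlen]
      rw [← hr]
      rfl
    -- events: for every n there is a time `t ≥ n` with `ρ t ∈ Tg n`
    have hev : ∀ n, ∃ t, n ≤ t ∧ ρ t ∈ Tg Z L n := by
      intro n
      have hexn : ∃ t, n + 1 ≤ phf Z L ρ t := hB (n+1)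
      set t' := Nat.find hexn with ht'
      have ht'spec : n + 1 ≤ phf Z L ρ t' := Nat.find_spec hexn
      have ht'pos : 0 < t' := by
        rcases Nat.eq_zero_or_pos t' with h | h
        · exfalso
          have := ht'spec
          rw [h, phf_zero] at this
          omega
        · exact h
      have hprev : phf Z L ρ (t' - 1) < n + 1 := by
        by_contra hcon
        have hfl : Nat.find hexn ≤ t' - 1 := Nat.find_le (le_of_not_gt hcon)
        omega
      have hstep := phf_succ Z L ρ (t' - 1)
      rw [show t' - 1 + 1 = t' by omega] at hstep
      by_cases hT : ρ (t' - 1) ∈ Tg Z L (phf Z L ρ (t' - 1))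
      · rw [if_pos hT] at hstep
        have hn : phf Z L ρ (t' - 1) = n := by omega
        refine ⟨t' - 1, ?_, by rwa [hn] at hT⟩
        have := phf_le Z L ρ (t' - 1)
        omega
      · rw [if_neg hT] at hstep
        omega
    -- visits of `Tg r` are unbounded, pigeonhole, contradiction
    have hio : {t | ρ t ∈ Tg Z L r}.Infinite := by
      rw [infinite_nat_iff_unbdd]
      intro N
      obtain ⟨t, ht1, ht2⟩ := hev (r + N * L.length)
      refine ⟨t, ?_, ?_⟩
      · have hlen1 : 1 ≤ L.length := by
          rcases Nat.eq_zero_or_pos L.length with h | h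
          · exfalso; omega
          · exact h
        have : N ≤ N * L.length := Nat.le_mul_of_pos_right N hlen1
        omega
      · have : Tg Z L (r + N * L.length) = Tg Z L r := by
          rw [Tg, Tg, Sx_mod L (r + N * L.length), Nat.add_mul_mod_self_right,
            Nat.mod_eq_of_lt hrlen]
        rwa [this] at ht2
    obtain ⟨x, hx1, hx2⟩ := exists_infOcc_of_io hio
    rw [Tg, hSr] at hx1
    exact hx1.2 hx2
  · -- Case II: the phase stabilizes
    push_neg at hB
    obtain ⟨N, hN⟩ := hB
    -- the phase attains a maximum value
    have hub : ∃ m, ∀ t, phf Z L ρ t ≤ m := ⟨N, fun t => by have := hN t; omega⟩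
    set M := Nat.find hub with hM
    have hMub : ∀ t, phf Z L ρ t ≤ M := Nat.find_spec hub
    have hMatt : ∃ t0, phf Z L ρ t0 = M := by
      by_contra hcon
      push_neg at hcon
      rcases Nat.eq_zero_or_pos M with h | h
      · exact hcon 0 (by rw [phf_zero, h])
      · have : ∀ t, phf Z L ρ t ≤ M - 1 := by
          intro t
          have h1 := hMub t
          have h2 := hcon t
          omega
        have hfl : Nat.find hub ≤ M - 1 := Nat.find_le this
        omega
    obtain ⟨t0, ht0⟩ := hMatt
    set i := M with hi
    have hconst : ∀ t, t0 ≤ t → phf Z L ρ t = i := by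
      intro t ht
      have h1 := phf_mono Z L ρ ht
      have h2 := hMub t
      omega
    -- after `t0` the play never visits the target `Tg i`
    have hnoT : ∀ t, t0 ≤ t → ρ t ∉ Tg Z L i := by
      intro t ht hT
      have hstep := phf_succ Z L ρ t
      rw [hconst t ht, if_pos hT] at hstep
      have := hconst (t+1) (by omega)
      omega
    -- after `t0` the play never stays in the attractor region
    have hmoves : ∀ t, t0 ≤ t → ρ t ∈ Attr A Z σ (Tg Z L i) → ρ t ∉ Tg Z L i →
        ρ t ∈ A.P σ → ρ (t+1) = attrMove A Z σ (Tg Z L i) (ρ t) := by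
      intro t ht hA hnT hP
      have hc := hcons t hP
      rw [ofFn_eq_pref] at hc
      have hphase : phf Z L ρ (t+1) = i := hconst (t+1) (by omega)
      have hnY : ρ t ∉ Yy A Z σ L (phf Z L ρ (t+1)) := by
        rw [hphase]
        intro hY
        exact hY.2 hA
      have hFeq := hFA t hnY (by rw [hphase]; exact ⟨hA, hnT⟩)
      rw [hphase] at hFeq
      have hspec := attrMove_spec hA hnT hP
      rw [patch_move_eq σ hZ F (by rw [hFeq]; exact hspec.1)
        (by rw [hFeq]; exact hspec.2.1), hFeq] at hc
      exact hc
    have hnoA : ∀ t, t0 ≤ t → ρ t ∉ Attr A Z σ (Tg Z L i) := by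
      intro t ht hA
      obtain ⟨t1, ht1a, ht1b⟩ := attr_reach (hTgZ i) hZ.1 hplay t hA
        (fun j hj hjA hjT hjP => hmoves j (by omega) hjA hjT hjP)
      exact hnoT t1 (by omega) ht1b
    have hYall : ∀ t, t0 ≤ t → ρ t ∈ Yy A Z σ L i := by
      intro t ht
      exact ⟨(hplay t).1, hnoA t ht⟩
    -- the entry point of the final sojourn
    set GoodG : ℕ → Prop := fun j => phf Z L ρ (j+1) = i ∧ ρ j ∈ Yy A Z σ L i
      with hGoodG
    have hexG : ∃ e, ∀ j, e ≤ j → GoodG j :=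
      ⟨t0, fun j hj => ⟨hconst (j+1) (by omega), hYall j hj⟩⟩
    set e := Nat.find hexG with he
    have heG : ∀ j, e ≤ j → GoodG j := Nat.find_spec hexG
    have hemin : e = 0 ∨ ¬ GoodG (e - 1) := by
      rcases Nat.eq_zero_or_pos e with h | h
      · exact Or.inl h
      · right
        intro hGe
        have : ∀ j, e - 1 ≤ j → GoodG j := by
          intro j hj
          rcases Nat.lt_or_ge j e with h' | h'
          · have : j = e - 1 := by omega
            rwa [this]
          · exact heG j h'
        have hfl : Nat.find hexG ≤ e - 1 := Nat.find_le this
        omega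
    -- the strategy plays the subgame strategy from `ρ e` after time `e`
    have hent : ∀ t, e ≤ t → entL A Z σ L (pref ρ (t+1)) (ρ t) = e := by
      intro t ht
      rw [entL, Nat.find_eq_iff]
      constructor
      · intro j hj hj'
        rw [pref_length] at hj'
        have hG := heG j hj
        constructor
        · rw [pref_take ρ (show j+1 ≤ t+1 by omega)]
          show phf Z L ρ (j+1) = phf Z L ρ (t+1)
          rw [hG.1, (heG t ht).1]
        · rw [pref_getD ρ hj']
          show ρ j ∈ Yy A Z σ L (phf Z L ρ (t+1))
          have hit : phf Z L ρ (t+1) = i := (heG t ht).1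
          rw [hit]
          exact hG.2
      · intro m hm
        intro hQ
        have hepos : 0 < e := by omega
        have hGood := hQ (e-1) (by omega) (by rw [pref_length]; omega)
        rcases hemin with h | h
        · omega
        · apply h
          rw [hGoodG]
          constructor
          · have h1 := hGood.1
            rw [pref_take ρ (show e-1+1 ≤ t+1 by omega)] at h1
            have : phf Z L ρ (t+1) = i := (heG t ht).1
            rw [← this]
            exact h1
          · have h2 := hGood.2
            rw [pref_getD ρ (show e-1 < t+1 by omega)] at h2
            have : phf Z L ρ (t+1) = i := (heG t ht).1
            rw [← this]
            exact h2
    -- tail play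
    set u := ρ e with hu
    have huY : u ∈ Yy A Z σ L i := (heG e (le_refl e)).2
    set ρ' : ℕ → α := fun t => ρ (e + t) with hρ'
    have hplay' : IsPlayIn A (Yy A Z σ L i) ρ' := by
      intro t
      constructor
      · exact (heG (e+t) (by omega)).2
      · show (ρ (e+t), ρ (e+(t+1))) ∈ A.E
        rw [show e + (t+1) = (e+t)+1 by omega]
        exact (hplay (e+t)).2
    have hcons' : ConsistentIn (sY i u huY) ρ' := by
      intro t hP
      have hc := hcons (e + t) hP
      rw [ofFn_eq_pref] at hc
      have hphase : phf Z L ρ (e+t+1) = i := (heG (e+t) (by omega)).1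
      have hYt : ρ (e+t) ∈ Yy A Z σ L (phf Z L ρ (e+t+1)) := by
        rw [hphase]; exact (heG (e+t) (by omega)).2
      have hFeq := hFY (e+t) hYt
      rw [hent (e+t) (by omega)] at hFeq
      rw [pref_getD ρ (show e < e+t+1 by omega)] at hFeq
      rw [hphase] at hFeq
      rw [show (pref ρ (e+t)).drop e = pref ρ' t by rw [pref_drop, ← hρ']] at hFeq
      have hsYeq : sY' i (ρ e) = sY i u huY := by
        rw [hsY'def]
        simp only [← hu, dif_pos huY]
      rw [hsYeq] at hFeq
      have hleg := (sY i u huY).legal (pref ρ' t) (ρ (e+t)) ⟨(heG (e+t) (by omega)).2, hP⟩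
      rw [patch_move_eq σ hZ F (by rw [hFeq]; exact hleg.1)
        (by rw [hFeq]; exact hYZ i hleg.2), hFeq] at hc
      rw [ofFn_eq_pref]
      show ρ (e + (t+1)) = _
      rw [show e + (t+1) = (e+t)+1 by omega]
      exact hc
    have hwin' := hsY i u huY ρ' hplay' rfl hcons'
    exact phi_congr (infOcc_tail_eq ρ e) hwin'

end Cycling
end MullerAux

namespace MullerAux
section Det
variable {α : Type} [Fintype α]
set_option linter.unusedSectionVars false
open Classical

theorem determinacy (A : Arena α) (Ω : Set (Set α)) :
    ∀ (N : ℕ) (X : Set α), X.ncard < N → Subarena A X →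
      ∀ v ∈ X, WinsFrom A X (MullerPayoff Ω) 0 v ∨ WinsFrom A X (MullerPayoff Ω) 1 v := by
  intro N
  induction N with
  | zero => intro X h; omega
  | succ N IH =>
    intro X hcard hXsub v hvX
    set σ : Fin 2 := if X ∈ Ω then 0 else 1 with hσ
    have hclsX : Cls Ω σ X := by
      by_cases h : X ∈ Ω <;> simp [hσ, Cls, h]
    set τ : Fin 2 := 1 - σ with hτ
    have hτσ : 1 - τ = σ := fin2_sub_sub σ
    set Fam : Set (Set α) := {S | S ⊆ X ∧ Cls Ω τ S} with hFam
    have hFamFin : Fam.Finite := Set.toFinite Fam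
    set L : List (Set α) := hFamFin.toFinset.toList with hLdef
    have hmemL : ∀ S, S ∈ L ↔ (S ⊆ X ∧ Cls Ω τ S) := by
      intro S
      rw [hLdef, Finset.mem_toList, Set.Finite.mem_toFinset]
      exact Iff.rfl
    set XP : Set α → Set α := fun U => X \ Attr A X τ U with hXP
    set YSet : Set α → Set α → Set α :=
      fun U S => XP U \ Attr A (XP U) σ (XP U \ S) with hYSet
    have hYsubX : ∀ U S, YSet U S ⊆ X :=
      fun U S => (Set.diff_subset).trans Set.diff_subset
    have hYsubS : ∀ U S, YSet U S ⊆ S := by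
      intro U S u hu
      by_contra hc
      exact hu.2 (subset_attr ⟨hu.1, hc⟩)
    set step : Set α → Set α := fun U =>
      Attr A X τ (U ∪ ⋃ S ∈ Fam, WinSet A (YSet U S) (MullerPayoff Ω) τ) with hstepdef
    set Useq : ℕ → Set α :=
      fun n => Nat.rec (motive := fun _ => Set α) (∅ : Set α) (fun _ ih => step ih) n
      with hUdef
    have hU0 : Useq 0 = ∅ := rfl
    have hUsucc : ∀ n, Useq (n+1) = step (Useq n) := fun n => rfl
    have hTsub : ∀ U, U ⊆ X →
        (U ∪ ⋃ S ∈ Fam, WinSet A (YSet U S) (MullerPayoff Ω) τ) ⊆ X := by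
      intro U hUX
      refine Set.union_subset hUX (Set.iUnion₂_subset fun S hS => ?_)
      exact (Set.sep_subset _ _).trans (hYsubX U S)
    have hUX : ∀ n, Useq n ⊆ X := by
      intro n
      induction n with
      | zero => rw [hU0]; exact Set.empty_subset X
      | succ n ih =>
        rw [hUsucc]
        exact attr_subset (hTsub _ ih)
    have hUmono : ∀ n, Useq n ⊆ Useq (n+1) := by
      intro n
      rw [hUsucc]
      exact Set.subset_union_left.trans subset_attr
    -- player τ wins G(X) from every vertex of every iterate
    have hUwin : ∀ n, ∀ u ∈ Useq n, WinsFrom A X (MullerPayoff Ω) τ u := by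
      intro n
      induction n with
      | zero => intro u hu; rw [hU0] at hu; exact absurd hu (Set.notMem_empty u)
      | succ n ih =>
        intro u hu
        rw [hUsucc] at hu
        refine attrWin τ hXsub (hTsub _ (hUX n)) ?_ u hu
        intro w hw
        rcases hw with hw | hw
        · exact ih w hw
        · simp only [Set.mem_iUnion] at hw
          obtain ⟨S, hS, hwW⟩ := hw
          have hwY : w ∈ YSet (Useq n) S := hwW.1
          have hwWin : WinsFrom A (YSet (Useq n) S) (MullerPayoff Ω) τ w := hwW.2
          refine trapConcat (D := Attr A X τ (Useq n)) τ hXsub (hYsubX _ _) ?_ ?_ hwY hwWin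
          · -- exits from the σ-trap `YSet` inside `XP` land in the attractor
            intro y hy hyP u' hE hu'X
            by_cases hu' : u' ∈ XP (Useq n)
            · left
              exact attr_compl_trap ⟨hy.1, hy.2⟩ (by rwa [hτσ] at hyP) hE hu'
            · right
              by_contra hc
              exact hu' ⟨hu'X, hc⟩
          · exact fun u' hu' => attrWin τ hXsub (hUX n) ih u' hu'
    -- the fixpoint
    obtain ⟨N₀, hN₀⟩ := chain_stabilize Useq hUmono
      (fun n h => by
        have e1 : Useq (n+2) = step (Useq (n+1)) := hUsucc (n+1)
        have e2 : Useq (n+1) = step (Useq n) := hUsucc n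
        rw [e1, ← h, ← e2]
        exact h)
    set W := Useq N₀ with hW
    have hfix : step W = W := by
      have h1 : Useq (N₀ + 1) = Useq N₀ := hN₀ (N₀+1) (by omega)
      calc step W = Useq (N₀ + 1) := (hUsucc N₀).symm
      _ = Useq N₀ := h1
    have hWwin : ∀ u ∈ W, WinsFrom A X (MullerPayoff Ω) τ u := hUwin N₀
    have hWX : W ⊆ X := hUX N₀
    -- the attractor of W is W
    have hattrW : Attr A X τ W = W := by
      refine Set.Subset.antisymm ?_ subset_attr
      calc Attr A X τ W ⊆ step W := attr_mono_target Set.subset_union_left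
      _ = W := hfix
    have hXstar : X \ W = XP W := by
      rw [hXP]
      simp only [hattrW]
    -- Win sets of the subgames on `YSet W S` for `S ∈ Fam` are empty for τ
    have hWinEmpty : ∀ S ∈ Fam, WinSet A (YSet W S) (MullerPayoff Ω) τ = ∅ := by
      intro S hS
      rw [Set.eq_empty_iff_forall_notMem]
      intro u hu
      have h1 : u ∈ W := by
        rw [← hfix, hstepdef]
        refine subset_attr (Or.inr ?_)
        simp only [Set.mem_iUnion]
        exact ⟨S, hS, hu⟩
      have h2 : u ∈ YSet W S := hu.1
      have h3 : u ∈ XP W := h2.1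
      exact h3.2 (by rw [hattrW]; exact h1)
    -- σ fully wins the subgames `YSet W S`
    have hσwins : ∀ S ∈ Fam, ∀ u ∈ YSet W S,
        WinsFrom A (YSet W S) (MullerPayoff Ω) σ u := by
      intro S hS u hu
      have hSX : S ⊆ X := hS.1
      have hSne : S ≠ X := by
        intro h
        refine cls_not_both hclsX ?_
        rw [← hτ, ← h]
        exact hS.2
      have hSss : S ⊂ X := Set.ssubset_iff_subset_ne.mpr ⟨hSX, hSne⟩
      have hYss : YSet W S ⊂ X := Set.ssubset_of_subset_of_ssubset (hYsubS W S) hSss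
      have hYcard : (YSet W S).ncard < N := by
        have h1 : (YSet W S).ncard < X.ncard := Set.ncard_lt_ncard hYss (Set.toFinite X)
        omega
      have hYsub2 : Subarena A (YSet W S) :=
        attr_compl_subarena (attr_compl_subarena hXsub)
      have hdet := IH (YSet W S) hYcard hYsub2 u hu
      have hne : ∀ π, WinsFrom A (YSet W S) (MullerPayoff Ω) π u → π ≠ τ := by
        intro π hπ hπτ
        have : u ∈ WinSet A (YSet W S) (MullerPayoff Ω) τ := ⟨hu, hπτ ▸ hπ⟩
        rw [hWinEmpty S hS] at this
        exact this
      rcases fin2_cases σ with h | h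
      · rcases hdet with hd | hd
        · rwa [h]
        · exfalso
          exact hne 1 hd (by rw [hτ, h]; rfl)
      · rcases hdet with hd | hd
        · exfalso
          exact hne 0 hd (by rw [hτ, h]; rfl)
        · rwa [h]
    -- σ wins G(X) from every vertex of `X \ W` via the cycling strategy
    have hσXstar : ∀ v' ∈ X \ W, WinsFrom A X (MullerPayoff Ω) σ v' := by
      intro v' hv'
      have hZsub : Subarena A (XP W) := attr_compl_subarena hXsub
      have hv'' : v' ∈ XP W := by rw [← hXstar]; exact hv'
      have hcyc := cycling (Ω := Ω) (XP W) σ L hZsub ?_ ?_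
      · refine trapTransfer hXsub (Set.diff_subset) ?_ hv'' (hcyc v' hv'')
        intro w hw hwP u' hE hu'
        have : w ∈ X \ Attr A X τ W := hw
        refine attr_compl_trap this ?_ hE hu'
        rwa [← hτ] at hwP
      · -- hmem
        intro ρ hplay hcls
        rw [hmemL]
        constructor
        · refine (infOcc_subset_of_eventually 0 (fun i _ => (hplay i).1)).trans ?_
          exact (Set.diff_subset).trans (le_refl _)
        · rwa [← hτ] at hcls
      · -- hwin on the regions Yy
        intro r u hu
        rcases Nat.eq_zero_or_pos L.length with hlen | hlen
        · exfalso
          have h1 : Sx L r = ∅ := by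
            rw [Sx, List.length_eq_zero_iff.mp hlen]
            rfl
          have h2 : u ∈ Attr A (XP W) σ (Tg (XP W) L r) := by
            apply subset_attr
            rw [Tg, h1]
            exact ⟨hu.1, fun h => h.elim⟩
          exact hu.2 h2
        · have hSL : Sx L r ∈ L := by
            rw [Sx, List.getD_eq_getElem _ _ (Nat.mod_lt r hlen)]
            exact List.getElem_mem _
          have hSF : Sx L r ∈ Fam := by
            have := (hmemL (Sx L r)).mp hSL
            exact this
          have hYeq : Yy A (XP W) σ L r = YSet W (Sx L r) := rfl
          rw [hYeq] at hu ⊢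
          exact hσwins (Sx L r) hSF u hu
    -- conclusion
    by_cases hvW : v ∈ W
    · have hwin := hWwin v hvW
      rcases fin2_cases σ with h | h
      · right; rwa [hτ, h] at hwin
      · left
        have : τ = 0 := by rw [hτ, h]; rfl
        rwa [this] at hwin
    · have hwin := hσXstar v ⟨hvX, hvW⟩
      rcases fin2_cases σ with h | h
      · left; rwa [h] at hwin
      · right; rwa [h] at hwin

end Det
end MullerAux

namespace MullerAux
section Part1
variable {α : Type} [Fintype α]
set_option linter.unusedSectionVars false
open Classical

/-- the set of vertices reachable from `v` by finite plays consistent with the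
strategy `s` of player 0. -/
def ReachSet (A : Arena α) (s : StrategyIn A A.V 0) (v : α) : Set α :=
  {w | w ∈ A.V ∧ ∃ (n : ℕ) (p : ℕ → α), p 0 = v ∧ p n = w ∧
    (∀ i, i < n → p i ∈ A.V ∧ (p i, p (i+1)) ∈ A.E ∧
      (p i ∈ A.P 0 → p (i+1) = s.move (pref p i) (p i)))}

variable {A : Arena α} {s : StrategyIn A A.V 0} {v : α}

lemma reachSet_subset_V : ReachSet A s v ⊆ A.V := fun _ hw => hw.1

lemma self_mem_reachSet (hv : v ∈ A.V) : v ∈ ReachSet A s v :=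
  ⟨hv, 0, fun _ => v, rfl, rfl, fun i hi => absurd hi (by omega)⟩

/-- extension of a reachable vertex along the strategy (controlled vertices)
or along an arbitrary edge (opponent vertices). -/
lemma reachSet_extend {w u : α} (hw : w ∈ ReachSet A s v)
    (hE : (w, u) ∈ A.E)
    (hmov : ∀ (n : ℕ) (p : ℕ → α), p n = w → w ∈ A.P 0 →
      u = s.move (pref p n) w → True) -- dummy; real lemmas below
    : True := trivial

lemma reachSet_extend_nonctrl {w u : α} (hw : w ∈ ReachSet A s v)
    (hwP : w ∉ A.P 0) (hE : (w, u) ∈ A.E) : u ∈ ReachSet A s v := by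
  obtain ⟨hwV, n, p, hp0, hpn, hcond⟩ := hw
  refine ⟨(edge_mem_V hE).2, n + 1, (fun i => if i ≤ n then p i else u), ?_, ?_, ?_⟩
  · beta_reduce
    rw [if_pos (by omega)]; exact hp0
  · beta_reduce
    rw [if_neg (by omega)]
  · intro i hi
    beta_reduce
    rcases lt_or_ge i n with h2 | h2
    · have hcc := hcond i h2
      refine ⟨by rw [if_pos (by omega)]; exact hcc.1,
        by rw [if_pos (by omega), if_pos (by omega)]; exact hcc.2.1, ?_⟩
      intro hPP
      rw [if_pos (by omega)] at hPP
      rw [if_pos (by omega), if_pos (by omega),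
        pref_congr (fun j hj => if_pos (by omega : j ≤ n))]
      exact hcc.2.2 hPP
    · have hieq : i = n := by omega
      subst hieq
      refine ⟨by rw [if_pos (le_refl _), hpn]; exact hwV,
        by rw [if_pos (le_refl _), if_neg (by omega), hpn]; exact hE, ?_⟩
      intro hPP
      rw [if_pos (le_refl _), hpn] at hPP
      exact absurd hPP hwP

lemma reachSet_extend_ctrl {w : α} (hw : w ∈ ReachSet A s v) (hwP : w ∈ A.P 0) :
    ∃ u ∈ ReachSet A s v, (w, u) ∈ A.E := by
  obtain ⟨hwV, n, p, hp0, hpn, hcond⟩ := hw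
  have hleg := s.legal (pref p n) w ⟨hwV, hwP⟩
  refine ⟨s.move (pref p n) w, ?_, hleg.1⟩
  refine ⟨hleg.2, n + 1, (fun i => if i ≤ n then p i else s.move (pref p n) w),
    ?_, ?_, ?_⟩
  · beta_reduce
    rw [if_pos (by omega)]; exact hp0
  · beta_reduce
    rw [if_neg (by omega)]
  · intro i hi
    beta_reduce
    rcases lt_or_ge i n with h2 | h2
    · have hcc := hcond i h2
      refine ⟨by rw [if_pos (by omega)]; exact hcc.1,
        by rw [if_pos (by omega), if_pos (by omega)]; exact hcc.2.1, ?_⟩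
      intro hPP
      rw [if_pos (by omega)] at hPP
      rw [if_pos (by omega), if_pos (by omega),
        pref_congr (fun j hj => if_pos (by omega : j ≤ n))]
      exact hcc.2.2 hPP
    · have hieq : i = n := by omega
      subst hieq
      refine ⟨by rw [if_pos (le_refl _), hpn]; exact hwV,
        by rw [if_pos (le_refl _), if_neg (by omega), hpn]; exact hleg.1, ?_⟩
      intro _
      rw [if_pos (le_refl _), if_neg (by omega),
        pref_congr (fun j hj => if_pos (by omega : j ≤ i)), hpn]

lemma reachSet_subarena (hv : v ∈ A.V) : Subarena A (ReachSet A s v) := by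
  refine ⟨reachSet_subset_V, fun w hw => ?_⟩
  rcases P_cover (σ := 0) (reachSet_subset_V hw) with hP | hP
  · obtain ⟨u, hu, hE⟩ := reachSet_extend_ctrl hw hP
    exact ⟨u, hu, hE⟩
  · obtain ⟨u, hE⟩ := A.succ w (reachSet_subset_V hw)
    exact ⟨u, reachSet_extend_nonctrl hw (fun h0 => P_disjoint h0 hP) hE, hE⟩

lemma reachSet_trap (hv : v ∈ A.V) : TrapIn A A.V 1 (ReachSet A s v) := by
  refine ⟨reachSet_subset_V, ?_, ?_⟩
  · intro w hw
    have h11 : (1 - 1 : Fin 2) = 0 := rfl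
    rw [h11] at hw
    obtain ⟨u, hu, hE⟩ := reachSet_extend_ctrl hw.1 hw.2
    exact ⟨u, hu, hE⟩
  · intro w hw u hE _
    refine reachSet_extend_nonctrl hw.1 (fun h0 => ?_) hE
    exact P_disjoint (σ := 0) h0 (by
      have h11 : (1 - (0:Fin 2)) = 1 := rfl
      rw [h11]
      exact hw.2)

/-- player 0 fully wins the reachable set of a winning strategy. -/
lemma reachSet_fullyWins {Ω : Set (Set α)} (hv : v ∈ A.V)
    (hs : ∀ ρ, IsPlayIn A A.V ρ → ρ 0 = v → ConsistentIn s ρ → MullerPayoff Ω ρ) :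
    ∀ w ∈ ReachSet A s v, WinsFrom A (ReachSet A s v) (MullerPayoff Ω) 0 w := by
  intro w hw
  have hsub : Subarena A (ReachSet A s v) := reachSet_subarena hv
  obtain ⟨hwV, n, p, hp0, hpn, hcond⟩ := hw
  refine ⟨patch 0 hsub (fun h u' => s.move (pref p n ++ h) u'),
    fun ρ hplay h0 hcons => ?_⟩
  set q : ℕ → α := fun i => if i < n then p i else ρ (i - n) with hqdef
  have hqa : ∀ i, q (n + i) = ρ i := by
    intro i
    simp only [hqdef]
    rw [if_neg (by omega)]
    congr 1
    omega
  have hqb : ∀ i, i < n → q i = p i := by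
    intro i hi
    simp only [hqdef]
    rw [if_pos hi]
  have hqbe : ∀ i, i ≤ n → q i = p i := by
    intro i hi
    rcases lt_or_eq_of_le hi with h | h
    · exact hqb i h
    · subst h
      have := hqa 0
      rw [Nat.add_zero] at this
      rw [this, h0, ← hpn]
  have hq0 : q 0 = v := by rw [hqbe 0 (by omega)]; exact hp0
  -- the invariant: `q` is an `s`-consistent play prefix at every finite stage
  have main : ∀ t, ∀ i, i < n + t → q i ∈ A.V ∧ (q i, q (i+1)) ∈ A.E ∧
      (q i ∈ A.P 0 → q (i+1) = s.move (pref q i) (q i)) := by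
    intro t
    induction t with
    | zero =>
      intro i hi
      rw [Nat.add_zero] at hi
      have hc := hcond i hi
      rw [hqbe i (by omega), hqbe (i+1) (by omega),
        pref_congr (fun j hj => hqbe j (by omega))]
      exact hc
    | succ t ih =>
      intro i hi
      rcases lt_or_ge i (n + t) with h2 | h2
      · exact ih i h2
      · have hieq : i = n + t := by omega
        subst hieq
        have hρR : ρ t ∈ ReachSet A s v := (hplay t).1
        have hρV : ρ t ∈ A.V := reachSet_subset_V hρR
        have hedge : (q (n+t), q (n+t+1)) ∈ A.E := by
          rw [hqa t, show n+t+1 = n+(t+1) by omega, hqa (t+1)]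
          exact (hplay t).2
        refine ⟨by rw [hqa t]; exact hρV, hedge, ?_⟩
        intro hP
        rw [hqa t] at hP
        have hprefq : pref q (n+t) = pref p n ++ pref ρ t := by
          rw [pref_add]
          congr 1
          · exact pref_congr (fun j hj => hqb j hj)
          · exact pref_congr (fun j hj => hqa j)
        have hleg := s.legal (pref p n ++ pref ρ t) (ρ t) ⟨hρV, hP⟩
        -- the prescribed move stays in the reachable set
        have hoR : s.move (pref p n ++ pref ρ t) (ρ t) ∈ ReachSet A s v := by
          refine ⟨hleg.2, n + t + 1,
            (fun i => if i ≤ n + t then q i else s.move (pref p n ++ pref ρ t) (ρ t)),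
            ?_, ?_, ?_⟩
          · beta_reduce
            rw [if_pos (by omega)]; exact hq0
          · beta_reduce
            rw [if_neg (by omega)]
          · intro i hi2
            beta_reduce
            rcases lt_or_ge i (n + t) with h3 | h3
            · have hcc := ih i h3
              refine ⟨by rw [if_pos (by omega)]; exact hcc.1,
                by rw [if_pos (by omega), if_pos (by omega)]; exact hcc.2.1, ?_⟩
              intro hPP
              rw [if_pos (by omega)] at hPP
              rw [if_pos (by omega), if_pos (by omega),
                pref_congr (fun j hj => if_pos (by omega : j ≤ n + t))]
              exact hcc.2.2 hPP
            · have hieq2 : i = n + t := by omega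
              subst hieq2
              refine ⟨by rw [if_pos (le_refl _), hqa t]; exact hρV,
                by rw [if_pos (le_refl _), if_neg (by omega), hqa t]; exact hleg.1, ?_⟩
              intro _
              rw [if_pos (le_refl _), if_neg (by omega),
                pref_congr (fun j hj => if_pos (by omega : j ≤ n + t)), hprefq, hqa t]
        have hc := hcons t hP
        rw [ofFn_eq_pref] at hc
        have hpm := patch_move_eq 0 hsub (fun h u' => s.move (pref p n ++ h) u')
          (h := pref ρ t) (v := ρ t) hleg.1 hoR
        rw [hpm] at hc
        rw [show n+t+1 = n+(t+1) by omega, hqa (t+1), hprefq, hqa t]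
        exact hc
  have hqplay : IsPlayIn A A.V q := by
    intro i
    have := main (i+1) i (by omega)
    exact ⟨this.1, this.2.1⟩
  have hqcons : ConsistentIn s q := by
    intro i hP
    rw [ofFn_eq_pref]
    exact (main (i+1) i (by omega)).2.2 hP
  have hpay := hs q hqplay hq0 hqcons
  have hInf : InfOcc q = InfOcc ρ := by
    have hfeq : (fun t => q (n + t)) = ρ := funext hqa
    rw [← infOcc_tail_eq q n, hfeq]
  show if (0 : Fin 2) = 0 then MullerPayoff Ω ρ else ¬ MullerPayoff Ω ρ
  rw [if_pos rfl]
  show InfOcc ρ ∈ Ω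
  rw [← hInf]
  exact hpay

end Part1
end MullerAux
/-- Lemma 4.10, first part: if no nonempty subarena of `A` that
is a 1-trap is fully won by Player 0, then `Win_0(G) = ∅` and `Win_1(G) = V`. -/
theorem stmt8 (A : Arena α) (Ω : Set (Set α))
    (h : ¬ ∃ X : Set α, X.Nonempty ∧ Subarena A X ∧ TrapIn A A.V 1 X ∧
      FullyWins A X (MullerPayoff Ω) 0) :
    WinSet A A.V (MullerPayoff Ω) 0 = ∅ ∧
      WinSet A A.V (MullerPayoff Ω) 1 = A.V := by
  classical
  have hwin0 : WinSet A A.V (MullerPayoff Ω) 0 = ∅ := by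
    rw [Set.eq_empty_iff_forall_notMem]
    intro v hv
    obtain ⟨hvV, s, hsw⟩ := hv
    apply h
    have hs : ∀ ρ, IsPlayIn A A.V ρ → ρ 0 = v → ConsistentIn s ρ →
        MullerPayoff Ω ρ := by
      intro ρ h1 h2 h3
      have := hsw ρ h1 h2 h3
      simpa using this
    exact ⟨MullerAux.ReachSet A s v, ⟨v, MullerAux.self_mem_reachSet hvV⟩,
      MullerAux.reachSet_subarena hvV, MullerAux.reachSet_trap hvV,
      fun w hw => MullerAux.reachSet_fullyWins hvV hs w hw⟩
  refine ⟨hwin0, ?_⟩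
  apply Set.Subset.antisymm
  · exact fun v hv => hv.1
  · intro v hv
    refine ⟨hv, ?_⟩
    have hdet := MullerAux.determinacy A Ω (A.V.ncard + 1) A.V (by omega)
      MullerAux.V_subarena v hv
    rcases hdet with hd | hd
    · exfalso
      have hmem : v ∈ WinSet A A.V (MullerPayoff Ω) 0 := ⟨hv, hd⟩
      rw [hwin0] at hmem
      exact hmem
    · exact hd
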